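/- Define RF(G) = G / K where K is the intersection of kernels of all homomorphisms G → F (F a fixed nonabelian free group), and RF_na(G) = G / K_na where K_na is the intersection of kernels of all homomorphisms G → F with nonabelian image. Then the kernel of the natural surjection RF(G) → RF_na(G) equals the center of RF(G). -/

import Mathlib

namespace StmtAux

open FreeGroup

variable {α : Type*} [DecidableEq α]

lemma head_eq (a : α) (z : FreeGroup α)
    (h : z * FreeGroup.of a = FreeGroup.of a * z) (x : α) (bb : Bool) (t : List (α × Bool))
    (hw : z.toWord = (x, bb) :: t) : x = a := by
  by_contra hxa
  have hred : reduce z.toWord = z.toWord := reduce_toWord z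
  have hofa : (FreeGroup.of a : FreeGroup α) = mk [(a, true)] := by
    rw [← mk_toWord (x := FreeGroup.of a), toWord_of]
  have hz : z = mk z.toWord := mk_toWord.symm
  -- the word of `of a * z`
  have hu : (FreeGroup.of a * z).toWord = (a, true) :: z.toWord := by
    conv_lhs => rw [hofa, hz, mul_mk]
    have hax : ¬((a, true).1 = (x, bb).1 ∧ (a, true).2 = !(x, bb).2) :=
      fun h1 => hxa h1.1.symm
    rw [List.singleton_append, toWord_mk, reduce.cons, hred, hw]
    simp only [List.casesOn, if_neg hax]
  -- the word of its inverse
  have hzinv : z⁻¹ = mk (invRev z.toWord) := by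
    conv_lhs => rw [hz]
    rw [inv_mk]
  have hainv : (FreeGroup.of a : FreeGroup α)⁻¹ = mk [(a, false)] := by
    rw [hofa, inv_mk]; simp [invRev]
  have hvred : reduce (invRev z.toWord) = invRev z.toWord := by
    rw [reduce_invRev, hred]
  have huinv : ((FreeGroup.of a * z)⁻¹).toWord = reduce ((a, false) :: invRev z.toWord) := by
    rw [← h, mul_inv_rev, hainv, hzinv, mul_mk, List.singleton_append, toWord_mk]
  have hlen : ((FreeGroup.of a * z)⁻¹).toWord.length = z.toWord.length + 1 := by
    rw [toWord_inv, invRev_length, hu, List.length_cons]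
  -- analyze head of `invRev z.toWord`
  have hvne : invRev z.toWord ≠ [] := by
    rw [hw]; simp [invRev]
  obtain ⟨⟨y, c⟩, s, hv⟩ : ∃ p s, invRev z.toWord = p :: s := by
    cases hvW : invRev z.toWord with
    | nil => exact absurd hvW hvne
    | cons p s => exact ⟨p, s, rfl⟩
  by_cases hc : a = y ∧ (false : Bool) = !c
  · -- cancellation: lengths contradict
    have : ((FreeGroup.of a * z)⁻¹).toWord = s := by
      rw [huinv, reduce.cons, hvred, hv]
      simp only [List.casesOn]
      rw [if_pos ⟨hc.1, hc.2⟩]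
    have hls : s.length + 1 = z.toWord.length := by
      have := congrArg List.length hv
      rwa [invRev_length, List.length_cons, eq_comm] at this
    rw [this] at hlen
    omega
  · -- no cancellation
    have heq : invRev ((a, true) :: z.toWord) = (a, false) :: invRev z.toWord := by
      rw [← hu, ← toWord_inv, huinv, reduce.cons, hvred, hv]
      simp only [List.casesOn]
      rw [if_neg hc, ← hv]
    have heq2 : invRev z.toWord ++ [(a, false)] = (a, false) :: invRev z.toWord := by
      rw [← heq]; simp [invRev]
    have heq3 : (a, true) :: z.toWord = z.toWord ++ [(a, true)] := by
      have := congrArg invRev heq2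
      simpa [invRev, List.map_reverse, Function.comp_def, Bool.not_not] using this
    rw [hw, List.cons_append] at heq3
    injection heq3 with h1 h2
    injection h1 with hx hb
    exact hxa hx.symm

lemma comm_pow_aux (a : α) : ∀ n (z : FreeGroup α), z.toWord.length = n →
    z * FreeGroup.of a = FreeGroup.of a * z → ∃ k : ℤ, z = FreeGroup.of a ^ k := by
  intro n
  induction n using Nat.strong_induction_on with
  | _ n ih =>
    intro z hlen h
    have hred : reduce z.toWord = z.toWord := reduce_toWord z
    cases hw : z.toWord with
    | nil =>
      exact ⟨0, by rw [toWord_eq_nil_iff.mp hw, zpow_zero]⟩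
    | cons p t =>
      obtain ⟨x, bb⟩ := p
      have hx : x = a := head_eq a z h x bb t hw
      subst hx
      have hz : z = mk z.toWord := mk_toWord.symm
      have hofa : (FreeGroup.of x : FreeGroup α) = mk [(x, true)] := by
        rw [← mk_toWord (x := FreeGroup.of x), toWord_of]
      have hainv : (FreeGroup.of x : FreeGroup α)⁻¹ = mk [(x, false)] := by
        rw [hofa, inv_mk]; simp [invRev]
      cases bb with
      | true =>
        -- z = of x * z', z' = (of x)⁻¹ * z with word t
        have hz' : ((FreeGroup.of x)⁻¹ * z).toWord = t := by
          conv_lhs => rw [hainv, hz, mul_mk]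
          rw [List.singleton_append, toWord_mk, reduce.cons, hred, hw]
          simp only [List.casesOn]
          rw [if_pos (by simp)]
        have hcomm : ((FreeGroup.of x)⁻¹ * z) * FreeGroup.of x
            = FreeGroup.of x * ((FreeGroup.of x)⁻¹ * z) := by
          rw [mul_assoc, h]; group
        have hlt : t.length < n := by rw [hw] at hlen; simp at hlen; omega
        obtain ⟨k, hk⟩ := ih t.length hlt _ (by rw [hz']) hcomm
        refine ⟨k + 1, ?_⟩
        have hzz : z = FreeGroup.of x * ((FreeGroup.of x)⁻¹ * z) := by group
        rw [hzz, hk, zpow_add_one]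
        exact (Commute.refl (FreeGroup.of x)).zpow_right k
      | false =>
        have hz' : (FreeGroup.of x * z).toWord = t := by
          conv_lhs => rw [hofa, hz, mul_mk]
          rw [List.singleton_append, toWord_mk, reduce.cons, hred, hw]
          simp only [List.casesOn]
          rw [if_pos (by simp)]
        have hcomm : (FreeGroup.of x * z) * FreeGroup.of x
            = FreeGroup.of x * (FreeGroup.of x * z) := by
          rw [mul_assoc, h]
        have hlt : t.length < n := by rw [hw] at hlen; simp at hlen; omega
        obtain ⟨k, hk⟩ := ih t.length hlt _ (by rw [hz']) hcomm
        refine ⟨k - 1, ?_⟩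
        have hzz : z = (FreeGroup.of x)⁻¹ * (FreeGroup.of x * z) := by group
        rw [hzz, hk, zpow_sub_one]
        exact ((Commute.refl (FreeGroup.of x)).zpow_right k).inv_left

lemma comm_pow (a : α) (z : FreeGroup α)
    (h : z * FreeGroup.of a = FreeGroup.of a * z) : ∃ k : ℤ, z = FreeGroup.of a ^ k :=
  comm_pow_aux a _ z rfl h

lemma eq_one_of_comm_two {a b : α} (hab : a ≠ b) (z : FreeGroup α)
    (ha : z * FreeGroup.of a = FreeGroup.of a * z)
    (hb : z * FreeGroup.of b = FreeGroup.of b * z) : z = 1 := by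
  obtain ⟨m, hm⟩ := comm_pow a z ha
  obtain ⟨k, hk⟩ := comm_pow b z hb
  let ψ : FreeGroup α →* Multiplicative ℤ :=
    FreeGroup.lift fun x => if x = a then Multiplicative.ofAdd (1 : ℤ) else 1
  have h1 : ψ z = Multiplicative.ofAdd m := by
    rw [hm, map_zpow, FreeGroup.lift_apply_of, if_pos rfl, ← ofAdd_zsmul, smul_eq_mul, mul_one]
  have h2 : ψ z = Multiplicative.ofAdd 0 := by
    rw [hk, map_zpow, FreeGroup.lift_apply_of, if_neg (Ne.symm hab), one_zpow, ofAdd_zero]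
  have hm0 : m = 0 := Multiplicative.ofAdd.injective (h1 ▸ h2)
  rw [hm, hm0, zpow_zero]

lemma freeGroup_comm_of_subsingleton {ι : Type*} [Subsingleton ι]
    (x y : FreeGroup ι) : x * y = y * x := by
  rcases isEmpty_or_nonempty ι with hE | ⟨⟨i₀⟩⟩
  · have hone : ∀ w : FreeGroup ι, w = 1 := by
      intro w
      rw [← FreeGroup.toWord_eq_nil_iff]
      cases hw : w.toWord with
      | nil => rfl
      | cons p t => exact (hE.false p.1).elim
    rw [hone x, hone y]
  · have hz : ∀ w : FreeGroup ι, w ∈ Subgroup.zpowers (FreeGroup.of i₀) := by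
      intro w
      induction w using FreeGroup.induction_on with
      | C1 => exact one_mem _
      | of i => rw [Subsingleton.elim i i₀]; exact Subgroup.mem_zpowers _
      | inv_of i hi => exact inv_mem hi
      | mul u v hu hv => exact mul_mem hu hv
    obtain ⟨m, hm⟩ := hz x
    obtain ⟨k, hk⟩ := hz y
    rw [← hm, ← hk]
    exact ((Commute.refl (FreeGroup.of i₀)).zpow_zpow m k)

lemma eq_one_of_central {F : Type*} [Group F] [IsFreeGroup F] {z b c : F}
    (hz : ∀ x : F, z * x = x * z) (hbc : b * c ≠ c * b) : z = 1 := by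
  classical
  let e := IsFreeGroup.toFreeGroup (G := F)
  have hz' : ∀ w : FreeGroup (IsFreeGroup.Generators F), e z * w = w * e z := by
    intro w
    have h := hz (e.symm w)
    have := congrArg e (hz (e.symm w))
    simpa [map_mul] using this
  by_cases hsub : ∀ i j : IsFreeGroup.Generators F, i = j
  · exfalso
    apply hbc
    have hss : Subsingleton (IsFreeGroup.Generators F) := ⟨hsub⟩
    have := freeGroup_comm_of_subsingleton (e b) (e c)
    have := congrArg e.symm (by simpa [map_mul] using this :
      e (b * c) = e (c * b))
    simpa using this
  · push_neg at hsub
    obtain ⟨i, j, hij⟩ := hsub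
    have h1 := eq_one_of_comm_two hij (e z) (hz' _) (hz' _)
    have := congrArg e.symm h1
    simpa using this

end StmtAux

/-- The kernel of the natural surjection `RF(G) → RF_na(G)` is the center
of `RF(G)`. Here `RF(G) = G ⧸ K` where `K` is the intersection of the kernels
of all homomorphisms to a rank-two free group, and `RF_na(G) = G ⧸ Kna` where
`Kna` is the intersection of the kernels of those homomorphisms having
nonabelian image. -/
theorem stmt_4 {G : Type*} [Group G] (K Kna : Subgroup G)
    [K.Normal] [Kna.Normal]
    (hK : K = ⨅ f : G →* FreeGroup (Fin 2), f.ker)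
    (hKna : Kna = ⨅ f : {f : G →* FreeGroup (Fin 2) //
        ¬ ∀ x ∈ f.range, ∀ y ∈ f.range, x * y = y * x}, (f : G →* FreeGroup (Fin 2)).ker)
    (hle : K ≤ Kna.comap (MonoidHom.id G)) :
    (QuotientGroup.map K Kna (MonoidHom.id G) hle).ker
      = Subgroup.center (G ⧸ K) := by
  have key : ∀ g h : G, (QuotientGroup.mk g : G ⧸ K) * QuotientGroup.mk h
      = QuotientGroup.mk h * QuotientGroup.mk g ↔
      ∀ f : G →* FreeGroup (Fin 2), f g * f h = f h * f g := by
    intro g h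
    rw [← QuotientGroup.mk_mul, ← QuotientGroup.mk_mul, QuotientGroup.eq, hK]
    simp only [Subgroup.mem_iInf, MonoidHom.mem_ker]
    constructor
    · intro hf f
      have h1 := hf f
      simp only [map_mul, map_inv] at h1
      exact inv_mul_eq_one.mp h1
    · intro hf f
      simp only [map_mul, map_inv, hf f]
      group
  ext x
  induction x using QuotientGroup.induction_on with
  | H g =>
    rw [MonoidHom.mem_ker, QuotientGroup.map_mk, MonoidHom.id_apply,
      QuotientGroup.eq_one_iff, Subgroup.mem_center_iff]
    constructor
    · -- g ∈ Kna → central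
      intro hg y
      induction y using QuotientGroup.induction_on with
      | H h =>
        rw [key h g]
        intro f
        by_cases habel : ∀ x ∈ f.range, ∀ y ∈ f.range, x * y = y * x
        · exact habel (f h) ⟨h, rfl⟩ (f g) ⟨g, rfl⟩
        · have hg1 : f g = 1 := by
            rw [hKna] at hg
            simp only [Subgroup.mem_iInf, MonoidHom.mem_ker] at hg
            exact hg ⟨f, habel⟩
          rw [hg1, one_mul, mul_one]
    · -- central → g ∈ Kna
      intro hcen
      rw [hKna]
      simp only [Subgroup.mem_iInf, MonoidHom.mem_ker]
      rintro ⟨f, hf⟩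
      push_neg at hf
      obtain ⟨b, hb, c, hc, hbc⟩ := hf
      have hcomm : ∀ h : G, f g * f h = f h * f g := by
        intro h
        exact ((key h g).mp (hcen (QuotientGroup.mk h)) f).symm
      -- work in the subgroup f.range, which is a free group
      have : (⟨f g, ⟨g, rfl⟩⟩ : f.range) = 1 := by
        refine StmtAux.eq_one_of_central (b := (⟨b, hb⟩ : f.range))
          (c := (⟨c, hc⟩ : f.range)) ?_ ?_
        · rintro ⟨x, hx⟩
          obtain ⟨h, rfl⟩ := hx
          ext
          exact hcomm h
        · intro hEq
          apply hbc
          exact congrArg Subtype.val hEq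
      exact congrArg Subtype.val this
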